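/- Let r, s ≥ 1 and let σ be the permutation i ↦ 4r+2s−1−i of {0,…,4r+2s−1}. Then: (a) A ↦ σ[A] is a graph involution of the Kneser graph KG_{2r,2s} which flips the edge {{0,…,2r−1}, {2r+2s,…,4r+2s−1}}; and (b) the map sending an r-element set M ⊆ {0,…,2r+s−1} to the vertex {M ∪ σ[M]} of (KG_{2r,2s})^{Z₂} (note that M ∪ σ[M] is a σ-invariant 2r-element set, so its orbit is a singleton) is a graph homomorphism from KG_{r,s} to (KG_{2r,2s})^{Z₂}, where the vertices of KG_{r,s} are identified with r-subsets of {0,…,2r+s−1}. -/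

import Mathlib

open Metric unitInterval

noncomputable section

/-- The unit sphere `S^k` in `ℝ^(k+1)`. -/
abbrev Sph (k : ℕ) : Type := Metric.sphere (0 : EuclideanSpace ℝ (Fin (k+1))) 1

/-- `φ` is a multihomomorphism from `G` to `H`. -/
def IsMultihom {V W : Type*} (G : SimpleGraph V) (H : SimpleGraph W)
    (φ : V → Set W) : Prop :=
  (∀ v, (φ v).Nonempty) ∧ ∀ ⦃u v⦄, G.Adj u v → ∀ a ∈ φ u, ∀ b ∈ φ v, H.Adj a b

/-- The Hom space `|Hom(G,H)|`. -/
def HomSpace {V W : Type*} [Fintype W] (G : SimpleGraph V) (H : SimpleGraph W) : Type _ :=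
  {x : V → stdSimplex ℝ W // IsMultihom G H fun v => {w | (x v : W → ℝ) w ≠ 0}}

instance {V W : Type*} [Fintype W] (G : SimpleGraph V) (H : SimpleGraph W) :
    TopologicalSpace (HomSpace G H) :=
  inferInstanceAs (TopologicalSpace {_x : V → stdSimplex ℝ W // _})

/-- The map `|Hom(G,H)| → |Hom(G',H)|` induced by a graph homomorphism `κ : G' → G`;
for `G' = G` and `κ` an involution this is the induced (left) involution. -/
def pull {V V' W : Type*} [Fintype W] {G : SimpleGraph V} {G' : SimpleGraph V'}
    {H : SimpleGraph W} (κ : G' →g G) (x : HomSpace G H) : HomSpace G' H :=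
  ⟨fun v => x.1 (κ v), fun v => x.2.1 (κ v), fun _ _ huv => x.2.2 (κ.map_adj huv)⟩

/-- The (right) involution of `|Hom(G,H)|` induced by an involution `β` of `H`. -/
def rightAct {V W : Type*} [Fintype W] {G : SimpleGraph V} {H : SimpleGraph W}
    (β : H →g H) (hβ : Function.Involutive β) (x : HomSpace G H) : HomSpace G H :=
  ⟨fun v => ⟨fun b => (x.1 v : W → ℝ) (β b),
    fun b => (x.1 v).2.1 (β b),
    by
      rw [← (x.1 v).2.2]
      exact Fintype.sum_bijective β hβ.bijective _ _ fun b => rfl⟩,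
   fun v => by
      obtain ⟨w, hw⟩ := x.2.1 v
      exact ⟨β w, by show (x.1 v : W → ℝ) (β (β w)) ≠ 0; rw [hβ w]; exact hw⟩,
   fun u v huv a ha b hb => by
      have := x.2.2 huv (β a) ha (β b) hb
      simpa [hβ a, hβ b] using β.map_adj this⟩

/-- The complete graph `K₂` on `{0,1}`. -/
abbrev K2 : SimpleGraph (Fin 2) := SimpleGraph.completeGraph (Fin 2)

/-- The flip involution of `K₂`. -/
def flipK2 : K2 →g K2 :=
  ⟨fun v => 1 - v, fun {a b} h => by fin_cases a <;> fin_cases b <;> simp_all⟩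

/-- The cycle `C_m` on `ℤ/m`. -/
def cycle (m : ℕ) : SimpleGraph (ZMod m) where
  Adj u v := u ≠ v ∧ (u + 1 = v ∨ v + 1 = u)
  symm := ⟨fun _ _ h => ⟨h.1.symm, h.2.symm⟩⟩
  loopless := ⟨fun _ h => h.1 rfl⟩

/-- The involution `v ↦ (m-1) - v = -1 - v` of the cycle `C_m`. -/
def cycFlip (m : ℕ) : cycle m →g cycle m :=
  ⟨fun v => -1 - v, fun {a b} h => by
    show _ ≠ _ ∧ _
    refine ⟨fun e => h.1 (sub_right_injective e), ?_⟩
    rcases h.2 with e | e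
    · exact Or.inr (by rw [← e]; ring)
    · exact Or.inl (by rw [← e]; ring)⟩

/-- `X` is `m`-connected: nonempty, path-connected, and `πᵢ X` trivial for `1 ≤ i ≤ m`. -/
def MConnected (m : ℕ) (X : Type*) [TopologicalSpace X] : Prop :=
  Nonempty X ∧ PathConnectedSpace X ∧
    ∀ i, 1 ≤ i → i ≤ m → ∀ x : X, Subsingleton (HomotopyGroup (Fin i) X x)

end

noncomputable section

/-- The vertices of `G^{Z₂}`: the sets `{u, α u}` for vertices `u`. -/
def FixVert {V : Type*} (α : V → V) : Type _ := {A : Set V // ∃ u, A = {u, α u}}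

instance {V : Type*} [Finite V] (α : V → V) : Finite (FixVert α) :=
  inferInstanceAs (Finite {_A : Set V // _})

noncomputable instance {V : Type*} [Fintype V] (α : V → V) : Fintype (FixVert α) :=
  Fintype.ofFinite _

/-- The graph `G^{Z₂}` associated to a graph `G` with involution `α`. -/
def fixGraph {V : Type*} (G : SimpleGraph V) (α : G →g G) (hα : Function.Involutive α) :
    SimpleGraph (FixVert (α : V → V)) where
  Adj A B := ∃ u v, A.1 = {u, α u} ∧ B.1 = {v, α v} ∧ G.Adj u v ∧ G.Adj u (α v)
  symm := by
    refine ⟨?_⟩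
    rintro _ _ ⟨u, v, hA, hB, h1, h2⟩
    refine ⟨v, u, hB, hA, h1.symm, ?_⟩
    have := α.map_adj h2
    rw [hα] at this
    exact this.symm
  loopless := by
    refine ⟨?_⟩
    rintro A ⟨u, v, hA, hB, h1, h2⟩
    have hv : v ∈ ({u, α u} : Set V) := by
      rw [← hA, hB]; exact Set.mem_insert _ _
    simp only [Set.mem_insert_iff, Set.mem_singleton_iff] at hv
    rcases hv with rfl | rfl
    · exact h1.ne rfl
    · rw [hα] at h2
      exact h2.ne rfl

lemma flipK2_involutive : Function.Involutive (flipK2 : Fin 2 → Fin 2) := fun v => by fin_cases v <;> rfl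

lemma cycFlip_involutive (m : ℕ) : Function.Involutive (cycFlip m : ZMod m → ZMod m) :=
  fun v => by show -1 - (-1 - v) = v; ring

end

noncomputable section

/-- Vertices of the Kneser graph `KG_{n,l}`: `n`-element subsets of `{0,…,N-1}`. -/
def KGVert (n N : ℕ) : Type := {A : Finset (Fin N) // A.card = n}

instance (n N : ℕ) : Fintype (KGVert n N) :=
  inferInstanceAs (Fintype {A : Finset (Fin N) // A.card = n})

/-- The Kneser graph `KG_{n,l}`, on the `n`-subsets of `{0,…,2n+l-1}`;
sets are adjacent iff they are disjoint. -/
def KG (n l : ℕ) : SimpleGraph (KGVert n (2 * n + l)) where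
  Adj A B := A ≠ B ∧ Disjoint A.1 B.1
  symm := ⟨fun _ _ h => ⟨h.1.symm, h.2.symm⟩⟩
  loopless := ⟨fun _ h => h.1 rfl⟩

/-- The vertex map `A ↦ σ[A]` induced by `σ = Fin.rev : i ↦ N-1-i`. -/
def kgRevV (n N : ℕ) (A : KGVert n N) : KGVert n N :=
  ⟨A.1.image Fin.rev, by
    rw [Finset.card_image_of_injective _ Fin.rev_injective, A.2]⟩

lemma kgRevV_involutive (n N : ℕ) : Function.Involutive (kgRevV n N) := by
  intro A
  apply Subtype.ext
  show (A.1.image Fin.rev).image Fin.rev = A.1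
  rw [Finset.image_image]
  have : (Fin.rev ∘ Fin.rev : Fin N → Fin N) = id := funext fun i => Fin.rev_rev i
  rw [this, Finset.image_id]

/-- `σ` as a graph homomorphism of the Kneser graph. -/
def kgRevHom (n l : ℕ) : KG n l →g KG n l :=
  ⟨kgRevV n (2 * n + l), fun {A B} h => by
    show _ ≠ _ ∧ _
    constructor
    · intro e
      exact h.1 (kgRevV_involutive _ _ A ▸ kgRevV_involutive _ _ B ▸ congrArg (kgRevV n _) e)
    · show Disjoint (A.1.image Fin.rev) (B.1.image Fin.rev)
      rw [Finset.disjoint_image Fin.rev_injective]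
      exact h.2⟩

/-- The vertex `{0, …, 2r-1}` of `KG_{2r,2s}`. -/
def kneserE0 (r s : ℕ) : KGVert (2 * r) (2 * (2 * r) + 2 * s) :=
  ⟨(Finset.range (2 * r)).attachFin (fun m hm => by
      simp only [Finset.mem_range] at hm; omega),
   by rw [Finset.card_attachFin, Finset.card_range]⟩

/-- The vertex `{2r+2s, …, 4r+2s-1}` of `KG_{2r,2s}`. -/
def kneserE1 (r s : ℕ) : KGVert (2 * r) (2 * (2 * r) + 2 * s) :=
  ⟨(Finset.Ico (2 * r + 2 * s) (2 * (2 * r) + 2 * s)).attachFin (fun m hm => by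
      simp only [Finset.mem_Ico] at hm; omega),
   by rw [Finset.card_attachFin, Nat.card_Ico]; omega⟩

/-- The inclusion `{0,…,2r+s-1} ↪ {0,…,4r+2s-1}`. -/
def halfEmb (r s : ℕ) (i : Fin (2 * r + s)) : Fin (2 * (2 * r) + 2 * s) :=
  ⟨i.1, by omega⟩

/-- The `σ`-invariant `2r`-set `M ∪ σ[M]` associated to an `r`-set `M ⊆ {0,…,2r+s-1}`. -/
def bigV (r s : ℕ) (M : KGVert r (2 * r + s)) : KGVert (2 * r) (2 * (2 * r) + 2 * s) :=
  ⟨M.1.image (halfEmb r s) ∪ (M.1.image (halfEmb r s)).image Fin.rev, by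
    classical
    have hinj : Function.Injective (halfEmb r s) := fun a b h => by
      have h' := congrArg Fin.val h
      exact Fin.ext h'
    have hc1 : (M.1.image (halfEmb r s)).card = r := by
      rw [Finset.card_image_of_injective _ hinj, M.2]
    have hdisj : Disjoint (M.1.image (halfEmb r s))
        ((M.1.image (halfEmb r s)).image Fin.rev) := by
      rw [Finset.disjoint_left]
      intro a ha hb
      simp only [Finset.mem_image] at ha hb
      obtain ⟨x, hx, rfl⟩ := ha
      obtain ⟨b, ⟨y, hy, rfl⟩, he⟩ := hb
      have h2 := Fin.val_rev (halfEmb r s y)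
      have h5 : (halfEmb r s y).1 = y.1 := rfl
      have hx2 : x.1 < 2 * r + s := x.2
      have hy2 : y.1 < 2 * r + s := y.2
      have h3 : (Fin.rev (halfEmb r s y)).1 = (halfEmb r s x).1 := congrArg Fin.val he
      have h4 : (halfEmb r s x).1 = x.1 := rfl
      omega
    rw [Finset.card_union_of_disjoint hdisj, hc1,
        Finset.card_image_of_injective _ Fin.rev_injective, hc1]
    ring⟩

end

lemma halfEmb_injective (r s : ℕ) : Function.Injective (halfEmb r s) := by
  intro a b h
  simp only [halfEmb, Fin.mk.injEq] at h
  exact Fin.ext h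

lemma bigV_fixed (r s : ℕ) (M : KGVert r (2 * r + s)) :
    kgRevV _ _ (bigV r s M) = bigV r s M := by
  apply Subtype.ext
  show ((bigV r s M).1).image Fin.rev = (bigV r s M).1
  have hrr : (Fin.rev ∘ Fin.rev : Fin (2 * (2 * r) + 2 * s) → _) = id :=
    funext fun i => Fin.rev_rev i
  have key : ∀ X : Finset (Fin (2 * (2 * r) + 2 * s)),
      (X ∪ X.image Fin.rev).image Fin.rev = X ∪ X.image Fin.rev := by
    intro X
    rw [Finset.image_union, Finset.image_image, hrr, Finset.image_id, Finset.union_comm]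
  exact key _

lemma bigV_disjoint (r s : ℕ) (M N : KGVert r (2 * r + s))
    (h : Disjoint M.1 N.1) : Disjoint (bigV r s M).1 (bigV r s N).1 := by
  classical
  have hlow : ∀ (P : KGVert r (2 * r + s)) (a : Fin (2 * (2 * r) + 2 * s)),
      a ∈ P.1.image (halfEmb r s) → a.1 < 2 * r + s := by
    intro P a ha
    simp only [Finset.mem_image] at ha
    obtain ⟨x, _, rfl⟩ := ha
    exact x.2
  have hhigh : ∀ (P : KGVert r (2 * r + s)) (a : Fin (2 * (2 * r) + 2 * s)),
      a ∈ (P.1.image (halfEmb r s)).image Fin.rev → 2 * r + s ≤ a.1 := by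
    intro P a ha
    simp only [Finset.mem_image] at ha
    obtain ⟨b, ⟨x, _, rfl⟩, rfl⟩ := ha
    have h1 := Fin.val_rev (halfEmb r s x)
    have h2 : (halfEmb r s x).1 = x.1 := rfl
    have := x.2
    omega
  have hd1 : Disjoint (M.1.image (halfEmb r s)) (N.1.image (halfEmb r s)) := by
    rw [Finset.disjoint_image (halfEmb_injective r s)]; exact h
  have hd2 : Disjoint ((M.1.image (halfEmb r s)).image Fin.rev)
      ((N.1.image (halfEmb r s)).image Fin.rev) := by
    rw [Finset.disjoint_image Fin.rev_injective]; exact hd1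
  show Disjoint (M.1.image (halfEmb r s) ∪ (M.1.image (halfEmb r s)).image Fin.rev)
    (N.1.image (halfEmb r s) ∪ (N.1.image (halfEmb r s)).image Fin.rev)
  rw [Finset.disjoint_union_left, Finset.disjoint_union_right, Finset.disjoint_union_right]
  refine ⟨⟨hd1, ?_⟩, ?_, hd2⟩
  · rw [Finset.disjoint_left]
    intro a ha hb
    have := hlow M a ha; have := hhigh N a hb; omega
  · rw [Finset.disjoint_left]
    intro a ha hb
    have := hhigh M a ha; have := hlow N a hb; omega

theorem kneser_flip_and_hom_to_fixGraph (r s : ℕ) (hr : 1 ≤ r) (hs : 1 ≤ s) :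
    ((∀ A B, (KG (2 * r) (2 * s)).Adj A B →
        (KG (2 * r) (2 * s)).Adj (kgRevV _ _ A) (kgRevV _ _ B)) ∧
      Function.Involutive (kgRevV (2 * r) (2 * (2 * r) + 2 * s)) ∧
      kgRevV _ _ (kneserE0 r s) = kneserE1 r s ∧
      (KG (2 * r) (2 * s)).Adj (kneserE0 r s) (kneserE1 r s)) ∧
    ∀ M N, (KG r s).Adj M N →
      (fixGraph (KG (2 * r) (2 * s)) (kgRevHom (2 * r) (2 * s))
          (kgRevV_involutive _ _)).Adj
        ⟨{bigV r s M, kgRevV _ _ (bigV r s M)}, bigV r s M, rfl⟩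
        ⟨{bigV r s N, kgRevV _ _ (bigV r s N)}, bigV r s N, rfl⟩ := by
  classical
  have hE : kgRevV _ _ (kneserE0 r s) = kneserE1 r s := by
    apply Subtype.ext
    show ((kneserE0 r s).1).image Fin.rev = (kneserE1 r s).1
    apply Finset.ext
    intro a
    simp only [kneserE0, kneserE1, Finset.mem_image, Finset.mem_attachFin,
      Finset.mem_range, Finset.mem_Ico]
    constructor
    · rintro ⟨b, hb, rfl⟩
      have h1 := Fin.val_rev b
      omega
    · intro ha
      refine ⟨Fin.rev a, ?_, Fin.rev_rev a⟩
      have h1 := Fin.val_rev a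
      omega
  have hAdjE : (KG (2 * r) (2 * s)).Adj (kneserE0 r s) (kneserE1 r s) := by
    show _ ≠ _ ∧ _
    constructor
    · intro e
      have h0 : (⟨0, by omega⟩ : Fin (2 * (2 * r) + 2 * s)) ∈ (kneserE0 r s).1 := by
        simp only [kneserE0, Finset.mem_attachFin, Finset.mem_range]
        show 0 < 2 * r; omega
      rw [e] at h0
      simp only [kneserE1, Finset.mem_attachFin, Finset.mem_Ico] at h0
      omega
    · rw [Finset.disjoint_left]
      intro a ha hb
      simp only [kneserE0, Finset.mem_attachFin, Finset.mem_range] at ha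
      simp only [kneserE1, Finset.mem_attachFin, Finset.mem_Ico] at hb
      omega
  refine ⟨⟨fun A B h => (kgRevHom (2 * r) (2 * s)).map_adj h,
    kgRevV_involutive _ _, hE, hAdjE⟩, ?_⟩
  intro M N hMN
  refine ⟨bigV r s M, bigV r s N, rfl, rfl, ?_, ?_⟩
  · have hd := bigV_disjoint r s M N (show M ≠ N ∧ Disjoint M.1 N.1 from hMN).2
    show _ ≠ _ ∧ _
    refine ⟨?_, hd⟩
    intro e
    have hne : (bigV r s M).1.Nonempty := by
      rw [← Finset.card_pos, (bigV r s M).2]; omega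
    obtain ⟨a, ha⟩ := hne
    have := Finset.disjoint_left.1 hd ha (e ▸ ha)
    exact this
  · rw [show ((kgRevHom (2 * r) (2 * s) : _ → _) (bigV r s N)) = bigV r s N
        from bigV_fixed r s N]
    have hd := bigV_disjoint r s M N (show M ≠ N ∧ Disjoint M.1 N.1 from hMN).2
    show _ ≠ _ ∧ _
    refine ⟨?_, hd⟩
    intro e
    have hne : (bigV r s M).1.Nonempty := by
      rw [← Finset.card_pos, (bigV r s M).2]; omega
    obtain ⟨a, ha⟩ := hne
    exact Finset.disjoint_left.1 hd ha (e ▸ ha)
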